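/- arXiv:2511.11841 — 2 statements merged into one kernel-verified Lean document; each statement's English description precedes it below -/
import Mathlib

section
/- Let K be a perfect field and let p < q be distinct primes with p ∤ q − 1. Then every Galois extension L/K of degree pq is not primitive. -/
open IntermediateField Module

section Defs

variable (K Kbar : Type*) [Field K] [Field Kbar] [Algebra K Kbar]

/-- The Galois closure inside the ambient field `Kbar` of an intermediate field `L` of
`Kbar / K`: the compositum of all the `K`-conjugates of `L` in `Kbar`. -/
noncomputable def galClosure (L : IntermediateField K Kbar) : IntermediateField K Kbar :=
  ⨆ f : ↥L →ₐ[K] Kbar, f.fieldRange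

/-- The subgroup `H = Gal(L̃/L)` of `G = Gal(L̃/K)`. -/
noncomputable def fixSub (L : IntermediateField K Kbar) :
    Subgroup (↥(galClosure K Kbar L) ≃ₐ[K] ↥(galClosure K Kbar L)) :=
  (IntermediateField.comap (galClosure K Kbar L).val L).fixingSubgroup

/-- The cluster size `r_K(L) = [N_G(H) : H]`. -/
noncomputable def clusterSize (L : IntermediateField K Kbar) : ℕ :=
  (fixSub K Kbar L).relIndex (Subgroup.normalizer (fixSub K Kbar L : Set _))

/-- The number of clusters `s_K(L) = [G : N_G(H)]`. -/
noncomputable def numClusters (L : IntermediateField K Kbar) : ℕ :=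
  (Subgroup.normalizer (fixSub K Kbar L :
      Set (↥(galClosure K Kbar L) ≃ₐ[K] ↥(galClosure K Kbar L)))).index

/-- The ascending index `t_K(L) = [G : H^G]`. -/
noncomputable def ascIndex (L : IntermediateField K Kbar) : ℕ :=
  (Subgroup.normalClosure (fixSub K Kbar L :
      Set (↥(galClosure K Kbar L) ≃ₐ[K] ↥(galClosure K Kbar L)))).index

/-- The quantity `u_K(L) = [H^G : H]`. -/
noncomputable def uIndex (L : IntermediateField K Kbar) : ℕ :=
  (fixSub K Kbar L).relIndex (Subgroup.normalClosure (fixSub K Kbar L :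
      Set (↥(galClosure K Kbar L) ≃ₐ[K] ↥(galClosure K Kbar L))))

/-- `M/K` is obtained by strong cluster magnification from `L/K` through `F/K`. -/
def IsSCMvia (M L F : IntermediateField K Kbar) : Prop :=
  L ≤ M ∧ 2 < Module.finrank K ↥L ∧ FiniteDimensional K ↥F ∧ IsGalois K ↥F ∧
    galClosure K Kbar L ⊓ F = ⊥ ∧ L ⊔ F = M

/-- `M/K` is primitive: it is not obtained by a nontrivial strong cluster magnification
from any subextension over `K`. -/
def IsPrimitive (M : IntermediateField K Kbar) : Prop :=
  ¬ ∃ L F : IntermediateField K Kbar, IsSCMvia K Kbar M L F ∧ F ≠ ⊥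

/-- `M/K` is obtained by strong general magnification from `L/K` through `J/K`. -/
def IsSGMvia (M L J : IntermediateField K Kbar) : Prop :=
  L ≤ M ∧ 1 < Module.finrank K ↥L ∧ FiniteDimensional K ↥J ∧
    galClosure K Kbar L ⊓ galClosure K Kbar J = ⊥ ∧ L ⊔ J = M

/-- `M/K` is general primitive: not obtained by a nontrivial strong general magnification
from any subextension over `K`. -/
def IsGeneralPrimitive (M : IntermediateField K Kbar) : Prop :=
  ¬ ∃ L J : IntermediateField K Kbar, IsSGMvia K Kbar M L J ∧ J ≠ ⊥

/-- `F/E` is a Galois pair of intermediate fields: `E ≤ F` and `F/E` is Galois. -/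
def IsGaloisPair (E F : IntermediateField K Kbar) : Prop :=
  ∃ h : E ≤ F, IsGalois ↥E ↥(IntermediateField.extendScalars h)

/-- One step of the unique descending chain: `N'` is an intermediate field of `N/K` such
that `N/N'` is Galois of maximal possible degree. -/
def DescStep (N N' : IntermediateField K Kbar) : Prop :=
  N' ≤ N ∧ IsGaloisPair K Kbar N' N ∧
    ∀ N'' : IntermediateField K Kbar, N'' ≤ N → IsGaloisPair K Kbar N'' N →
      Module.finrank K ↥N' ≤ Module.finrank K ↥N''

/-- One step of the unique ascending chain for `L/K`: `F'` is an intermediate field of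
`L/F` such that `F'/F` is Galois of maximal possible degree. -/
def AscStep (L F F' : IntermediateField K Kbar) : Prop :=
  F ≤ F' ∧ F' ≤ L ∧ IsGaloisPair K Kbar F F' ∧
    ∀ F'' : IntermediateField K Kbar, F ≤ F'' → F'' ≤ L → IsGaloisPair K Kbar F F'' →
      Module.finrank K ↥F'' ≤ Module.finrank K ↥F'

/-- `E` occurs in the unique descending chain of `L/K`. -/
def InDescChain (L E : IntermediateField K Kbar) : Prop :=
  Relation.ReflTransGen (DescStep K Kbar) L E

/-- `E` occurs in the unique ascending chain of `L/K`. -/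
def InAscChain (L E : IntermediateField K Kbar) : Prop :=
  Relation.ReflTransGen (AscStep K Kbar L) ⊥ E

end Defs


lemma galClosure_eq_self {K Kbar : Type*} [Field K] [Field Kbar] [Algebra K Kbar]
    (N : IntermediateField K Kbar) [Normal K ↥N] : galClosure K Kbar N = N := by
  have : Nonempty (↥N →ₐ[K] Kbar) := ⟨N.val⟩
  simp only [galClosure]
  rw [iSup_congr (fun f => AlgHom.fieldRange_of_normal f), iSup_const]

lemma sylow_aux {G : Type*} [Group G] [Finite G] {r s : ℕ} (hr : r.Prime) (hs : s.Prime)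
    (hne : r ≠ s) (hmod : ¬ s ≡ 1 [MOD r]) (hcard : Nat.card G = r * s) (P : Sylow r G) :
    Nat.card P = r ∧ P.toSubgroup.Normal := by
  haveI : Fact r.Prime := ⟨hr⟩
  have hnd : ¬ r ∣ s := fun h => hne ((Nat.prime_dvd_prime_iff_eq hr hs).mp h)
  have hfac : (Nat.card G).factorization r = 1 := by
    rw [hcard, Nat.factorization_mul hr.pos.ne' hs.pos.ne']
    simp [Nat.Prime.factorization_self hr, Nat.factorization_eq_zero_of_not_dvd hnd]
  have hcardP : Nat.card P = r := by
    rw [P.card_eq_multiplicity, hfac, pow_one]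
  have hindex : P.toSubgroup.index = s := by
    have h1 := Subgroup.card_mul_index P.toSubgroup
    rw [hcard] at h1
    have h2 : Nat.card P.toSubgroup = r := hcardP
    rw [h2] at h1
    exact Nat.eq_of_mul_eq_mul_left hr.pos h1
  have hsyl : Nat.card (Sylow r G) = 1 := by
    have hdvd : Nat.card (Sylow r G) ∣ s := hindex ▸ P.card_dvd_index
    rcases hs.eq_one_or_self_of_dvd _ hdvd with h | h
    · exact h
    · exact absurd (h ▸ card_sylow_modEq_one r G) hmod
  refine ⟨hcardP, ?_⟩
  have h3 := P.card_eq_index_normalizer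
  rw [hsyl] at h3
  exact Subgroup.normalizer_eq_top_iff.mp (Subgroup.index_eq_one.mp h3.symm)

set_option maxHeartbeats 1600000 in
set_option synthInstance.maxHeartbeats 1000000 in
/-- Let `K` be a perfect field and `p < q` distinct primes with `p ∤ q - 1`.
Then every Galois extension `L/K` of degree `p * q` is not primitive. -/
theorem not_primitive_of_galois_degree_pq
    (K Kbar : Type*) [Field K] [PerfectField K] [Field Kbar] [Algebra K Kbar]
    [IsAlgClosure K Kbar]
    (p q : ℕ) (hp : p.Prime) (hq : q.Prime) (hpq : p < q) (hndvd : ¬ p ∣ (q - 1))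
    (L : IntermediateField K Kbar) [FiniteDimensional K ↥L] [IsGalois K ↥L]
    (hdeg : Module.finrank K ↥L = p * q) :
    ¬ IsPrimitive K Kbar L := by
  classical
  have hG : Nat.card (↥L ≃ₐ[K] ↥L) = p * q := by
    rw [IsGalois.card_aut_eq_finrank, hdeg]
  haveI : Fact p.Prime := ⟨hp⟩
  haveI : Fact q.Prime := ⟨hq⟩
  obtain ⟨P⟩ : Nonempty (Sylow p (↥L ≃ₐ[K] ↥L)) := Sylow.nonempty
  obtain ⟨Q⟩ : Nonempty (Sylow q (↥L ≃ₐ[K] ↥L)) := Sylow.nonempty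
  have hmod1 : ¬ q ≡ 1 [MOD p] := fun h =>
    hndvd ((Nat.modEq_iff_dvd' hq.one_lt.le).mp h.symm)
  have hmod2 : ¬ p ≡ 1 [MOD q] := by
    intro h
    have h1 : q ∣ p - 1 := (Nat.modEq_iff_dvd' hp.one_lt.le).mp h.symm
    have h2 : q ≤ p - 1 := Nat.le_of_dvd (Nat.sub_pos_of_lt hp.one_lt) h1
    omega
  have hP := sylow_aux hp hq hpq.ne hmod1 hG P
  have hQ := sylow_aux hq hp hpq.ne' hmod2 (by rw [hG, mul_comm]) Q
  haveI hPn := hP.2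
  haveI hQn := hQ.2
  have hcop : Nat.Coprime p q := (Nat.coprime_primes hp hq).mpr hpq.ne
  have hinfG : P.toSubgroup ⊓ Q.toSubgroup = ⊥ := by
    apply Subgroup.inf_eq_bot_of_coprime
    rw [show Nat.card P.toSubgroup = p from hP.1, show Nat.card Q.toSubgroup = q from hQ.1]
    exact hcop
  have hsupG : P.toSubgroup ⊔ Q.toSubgroup = ⊤ := by
    apply Subgroup.eq_top_of_card_eq
    have h1 := Subgroup.card_dvd_of_le (le_sup_left : P.toSubgroup ≤ P.toSubgroup ⊔ Q.toSubgroup)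
    have h2 := Subgroup.card_dvd_of_le (le_sup_right : Q.toSubgroup ≤ P.toSubgroup ⊔ Q.toSubgroup)
    rw [hP.1] at h1
    rw [hQ.1] at h2
    have h3 := (P.toSubgroup ⊔ Q.toSubgroup).card_subgroup_dvd_card
    rw [hG]
    exact Nat.dvd_antisymm (hG ▸ h3) (hcop.mul_dvd_of_dvd_of_dvd h1 h2)
  set E1 := IntermediateField.fixedField P.toSubgroup with hE1def
  set E2 := IntermediateField.fixedField Q.toSubgroup with hE2def
  haveI : IsGalois K ↥E1 := IsGalois.of_fixedField_normal_subgroup P.toSubgroup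
  haveI : IsGalois K ↥E2 := IsGalois.of_fixedField_normal_subgroup Q.toSubgroup
  have hrank1 : finrank ↥E1 ↥L = p := by
    rw [hE1def, IntermediateField.finrank_fixedField_eq_card]
    exact hP.1
  have hrank2 : finrank ↥E2 ↥L = q := by
    rw [hE2def, IntermediateField.finrank_fixedField_eq_card]
    exact hQ.1
  have hE1rank : finrank K ↥E1 = q := by
    have h := finrank_mul_finrank K ↥E1 ↥L
    rw [hrank1, hdeg, mul_comm p q] at h
    exact Nat.eq_of_mul_eq_mul_right hp.pos h
  have hE2rank : finrank K ↥E2 = p := by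
    have h := finrank_mul_finrank K ↥E2 ↥L
    rw [hrank2, hdeg] at h
    exact Nat.eq_of_mul_eq_mul_right hq.pos h
  have anti : ∀ {A B : IntermediateField K ↥L}, A ≤ B →
      IntermediateField.fixingSubgroup B ≤ IntermediateField.fixingSubgroup A := by
    intro A B hAB g hg
    rw [IntermediateField.mem_fixingSubgroup_iff] at hg ⊢
    exact fun x hx => hg x (hAB hx)
  have hfixinf : E1 ⊓ E2 = ⊥ := by
    have htop : IntermediateField.fixingSubgroup (E1 ⊓ E2) = ⊤ := by
      rw [eq_top_iff, ← hsupG]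
      exact sup_le ((IntermediateField.le_iff_le _ _).mp inf_le_left)
        ((IntermediateField.le_iff_le _ _).mp inf_le_right)
    calc E1 ⊓ E2
        = IntermediateField.fixedField (IntermediateField.fixingSubgroup (E1 ⊓ E2)) :=
          (IsGalois.fixedField_fixingSubgroup _).symm
      _ = IntermediateField.fixedField
            (IntermediateField.fixingSubgroup (⊥ : IntermediateField K ↥L)) := by
          rw [htop, IntermediateField.fixingSubgroup_bot]
      _ = ⊥ := IsGalois.fixedField_fixingSubgroup _
  have hfixsup : E1 ⊔ E2 = ⊤ := by
    have hbot : IntermediateField.fixingSubgroup (E1 ⊔ E2) = ⊥ := by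
      rw [eq_bot_iff, ← hinfG]
      refine le_inf ?_ ?_
      · rw [← IntermediateField.fixingSubgroup_fixedField P.toSubgroup]
        exact anti le_sup_left
      · rw [← IntermediateField.fixingSubgroup_fixedField Q.toSubgroup]
        exact anti le_sup_right
    calc E1 ⊔ E2
        = IntermediateField.fixedField (IntermediateField.fixingSubgroup (E1 ⊔ E2)) :=
          (IsGalois.fixedField_fixingSubgroup _).symm
      _ = IntermediateField.fixedField
            (IntermediateField.fixingSubgroup (⊤ : IntermediateField K ↥L)) := by
          rw [hbot, IntermediateField.fixingSubgroup_top]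
      _ = ⊤ := IsGalois.fixedField_fixingSubgroup _
  set L' := E1.map L.val with hL'def
  set F' := E2.map L.val with hF'def
  have hmaple : ∀ E : IntermediateField K ↥L, E.map L.val ≤ L := by
    intro E
    have h := IntermediateField.map_mono L.val (le_top : E ≤ ⊤)
    rwa [← AlgHom.fieldRange_eq_map, IntermediateField.fieldRange_val] at h
  have hrk : ∀ E : IntermediateField K ↥L, finrank K ↥(E.map L.val) = finrank K ↥E :=
    fun E => ((IntermediateField.equivMap E L.val).toLinearEquiv.finrank_eq).symm
  haveI : IsGalois K ↥L' := IsGalois.of_algEquiv (IntermediateField.equivMap E1 L.val)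
  haveI : IsGalois K ↥F' := IsGalois.of_algEquiv (IntermediateField.equivMap E2 L.val)
  haveI : FiniteDimensional K ↥F' :=
    LinearEquiv.finiteDimensional (IntermediateField.equivMap E2 L.val).toLinearEquiv
  intro hprim
  apply hprim
  refine ⟨L', F', ⟨hmaple E1, ?_, inferInstance, inferInstance, ?_, ?_⟩, ?_⟩
  · rw [hL'def, hrk E1, hE1rank]
    have := hp.two_le
    omega
  · rw [galClosure_eq_self, hL'def, hF'def, ← IntermediateField.map_inf, hfixinf,
      IntermediateField.map_bot]
  · rw [hL'def, hF'def, ← IntermediateField.map_sup, hfixsup, ← AlgHom.fieldRange_eq_map,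
      IntermediateField.fieldRange_val]
  · intro h
    have h1 : finrank K ↥F' = p := by rw [hF'def, hrk E2, hE2rank]
    rw [h, IntermediateField.finrank_bot] at h1
    exact hp.one_lt.ne' h1.symm
end

section
/- Let n = 2^k with k ≥ 2, and let c be a positive odd integer such that the polynomial x^n − c is irreducible over ℚ. Let a = c^{1/n} be the positive real root of x^n − c and L = ℚ(a). Then L/ℚ is primitive. -/
open IntermediateField Module

section AuxProof
open Polynomial

/-- The reals as an intermediate field of `ℂ/ℚ`. -/
noncomputable def realIF : IntermediateField ℚ ℂ :=
  Subfield.toIntermediateField Complex.ofRealHom.fieldRange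
    (fun q => ⟨(q : ℝ), by simp⟩)

lemma mem_realIF (x : ℂ) : x ∈ realIF ↔ ∃ r : ℝ, (r : ℂ) = x := Iff.rfl

lemma key_mem (k : ℕ) (hk : 2 ≤ k) (c : ℕ) (hcpos : 0 < c)
    (hirr : Irreducible (X ^ (2 ^ k) - C (c : ℚ)))
    (a : ℝ) (ha : 0 < a) (hpow : a ^ (2 ^ k) = (c : ℝ))
    (E : IntermediateField ℚ ℂ) (hEM : E ≤ ℚ⟮((a : ℂ))⟯)
    (hE2 : 2 ≤ finrank ℚ ↥E) :
    ((a : ℂ)) ^ (2 ^ (k - 1)) ∈ E := by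
  set A : ℂ := (a : ℂ) with hA
  have hn : (2 : ℕ) ^ k ≠ 0 := pow_ne_zero _ two_ne_zero
  have hAn : A ^ (2 ^ k) = (c : ℂ) := by
    rw [hA, ← Complex.ofReal_pow, hpow]; push_cast; ring
  have heval : Polynomial.aeval A (X ^ (2 ^ k) - C (c : ℚ)) = 0 := by
    simp [hAn]
  have hmonic : (X ^ (2 ^ k) - C (c : ℚ)).Monic := monic_X_pow_sub_C _ hn
  have hint : IsIntegral ℚ A := ⟨_, hmonic, heval⟩
  have hminpoly : minpoly ℚ A = X ^ (2 ^ k) - C (c : ℚ) :=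
    (minpoly.eq_of_irreducible_of_monic hirr heval hmonic).symm
  haveI hfd : FiniteDimensional ℚ ↥(ℚ⟮A⟯) := IntermediateField.adjoin.finiteDimensional hint
  have hfinM : finrank ℚ ↥(ℚ⟮A⟯) = 2 ^ k := by
    rw [IntermediateField.adjoin.finrank hint, hminpoly, natDegree_X_pow_sub_C]
  haveI : FiniteDimensional ℚ ↥E :=
    FiniteDimensional.of_injective (IntermediateField.inclusion hEM).toLinearMap
      (IntermediateField.inclusion hEM).toRingHom.injective
  -- degree bookkeeping
  have hintE : IsIntegral ↥E A := hint.tower_top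
  set d := (minpoly ↥E A).natDegree with hd
  have hrel : relfinrank E ℚ⟮A⟯ = d := by
    rw [relfinrank_eq_finrank_of_le hEM, extendScalars_adjoin hEM,
      IntermediateField.adjoin.finrank hintE]
  have hmul : finrank ℚ ↥E * d = 2 ^ k := by
    rw [← hrel, finrank_bot_mul_relfinrank hEM, hfinM]
  have hddvd : d ∣ 2 ^ (k - 1) := by
    obtain ⟨m, hmk, hmd⟩ := (Nat.dvd_prime_pow Nat.prime_two).mp ⟨finrank ℚ ↥E, by
      rw [mul_comm, hmul]⟩
    have hmlt : m ≤ k - 1 := by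
      rcases Nat.lt_or_ge m k with h | h
      · omega
      · exfalso
        have hmk' : m = k := le_antisymm hmk h
        rw [hmd, hmk'] at hmul
        have : finrank ℚ ↥E = 1 := by
          have := Nat.eq_of_mul_eq_mul_right (Nat.pos_of_ne_zero hn) (hmul.trans (one_mul _).symm)
          exact this
        omega
    exact hmd ▸ pow_dvd_pow 2 hmlt
  have hd0 : 0 < d := minpoly.natDegree_pos hintE
  -- c ∈ E
  have hcE : ((c : ℚ) : ℂ) ∈ E := by
    have := E.algebraMap_mem (c : ℚ)
    simpa using this
  set cE : ↥E := ⟨((c : ℚ) : ℂ), hcE⟩ with hcEdef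
  have hdvd : minpoly ↥E A ∣ X ^ (2 ^ k) - C cE := by
    apply minpoly.dvd
    simp only [map_sub, map_pow, Polynomial.aeval_X, Polynomial.aeval_C]
    have : (algebraMap ↥E ℂ) cE = (c : ℂ) := by
      simp [hcEdef, IntermediateField.algebraMap_apply]
    rw [this, hAn, sub_self]
  -- mapped polynomial over ℂ
  set P : Polynomial ℂ := (minpoly ↥E A).map (algebraMap ↥E ℂ) with hP
  have hPmonic : P.Monic := (minpoly.monic hintE).map _
  have hPdeg : P.natDegree = d := by
    rw [hP, natDegree_map]
  have hPdvd : P ∣ X ^ (2 ^ k) - C ((c : ℚ) : ℂ) := by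
    have := Polynomial.map_dvd (algebraMap ↥E ℂ) hdvd
    rw [Polynomial.map_sub, Polynomial.map_pow, Polynomial.map_X, Polynomial.map_C] at this
    exact this
  have hroot_abs : ∀ z ∈ P.roots, ‖z‖ = a := by
    intro z hz
    have hz0 : P.eval z = 0 := by
      have := Polynomial.isRoot_of_mem_roots hz
      exact this
    have hz1 : z ^ (2 ^ k) = ((c : ℚ) : ℂ) := by
      have := Polynomial.eval_eq_zero_of_dvd_of_eval_eq_zero hPdvd hz0
      simp only [Polynomial.eval_sub, Polynomial.eval_pow, Polynomial.eval_X,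
        Polynomial.eval_C, sub_eq_zero] at this
      exact this
    have habs : ‖z‖ ^ (2 ^ k) = a ^ (2 ^ k) := by
      rw [← norm_pow, hz1, hpow]
      simp [Complex.norm_natCast]
    exact (pow_left_inj₀ (norm_nonneg z) ha.le hn).mp habs
  have hsplit : P = (P.roots.map fun z => X - C z).prod :=
    (IsAlgClosed.splits P).eq_prod_roots_of_monic hPmonic
  have hcard : P.roots.card = d := by
    rw [← hPdeg]
    exact (splits_iff_card_roots.mp (IsAlgClosed.splits _))
  have habs0 : ‖P.coeff 0‖ = a ^ d := by
    rw [Polynomial.coeff_zero_eq_eval_zero]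
    conv_lhs => rw [hsplit]
    rw [Polynomial.eval_multiset_prod, Multiset.map_map]
    rw [← normHom_apply, map_multiset_prod, Multiset.map_map]
    have : ∀ z ∈ P.roots, (⇑(normHom : ℂ →*₀ ℝ) ∘ Polynomial.eval 0 ∘ fun z => X - C z) z = a := by
      intro z hz
      simp only [Function.comp_apply, Polynomial.eval_sub, Polynomial.eval_X,
        Polynomial.eval_C, zero_sub, normHom_apply, norm_neg]
      exact hroot_abs z hz
    rw [Multiset.map_congr rfl this, Multiset.map_const', Multiset.prod_replicate, hcard]
  have hb_mem : P.coeff 0 ∈ E := by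
    rw [hP, Polynomial.coeff_map]
    exact SetLike.coe_mem _
  have hMreal : ℚ⟮A⟯ ≤ realIF := by
    rw [IntermediateField.adjoin_le_iff]
    intro x hx
    rcases hx with rfl
    exact ⟨a, rfl⟩
  obtain ⟨r, hr⟩ := hMreal (hEM hb_mem)
  have hrabs : |r| = a ^ d := by
    rw [← habs0, ← hr]
    simp
  have hAd : A ^ d ∈ E := by
    rcases (abs_eq (pow_nonneg ha.le d)).mp hrabs with h | h
    · have : A ^ d = P.coeff 0 := by
        rw [← hr, h, hA]
        simp [Complex.ofRealHom_eq_coe, Complex.ofReal_pow]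
      rw [this]; exact hb_mem
    · have : A ^ d = -(P.coeff 0) := by
        rw [← hr, h, hA]
        simp only [Complex.ofRealHom_eq_coe]
        push_cast
        ring
      rw [this]; exact E.neg_mem hb_mem
  obtain ⟨t, ht⟩ := hddvd
  rw [ht, pow_mul]
  exact pow_mem hAd t


private theorem main_test
    (k : ℕ) (hk : 2 ≤ k) (c : ℕ) (hodd : Odd c) (hcpos : 0 < c)
    (hirr : Irreducible (Polynomial.X ^ (2 ^ k) - Polynomial.C (c : ℚ)))
    (a : ℝ) (ha : 0 < a) (hpow : a ^ (2 ^ k) = (c : ℝ)) :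
    ¬ ∃ L F : IntermediateField ℚ ℂ,
      (L ≤ ℚ⟮((a : ℂ))⟯ ∧ 2 < Module.finrank ℚ ↥L ∧ FiniteDimensional ℚ ↥F ∧ IsGalois ℚ ↥F ∧
        (⨆ f : ↥L →ₐ[ℚ] ℂ, f.fieldRange) ⊓ F = ⊥ ∧ L ⊔ F = ℚ⟮((a : ℂ))⟯) ∧ F ≠ ⊥ := by
  rintro ⟨L, F, ⟨hLM, hL2, hFfd, hFgal, hinf, hsup⟩, hFne⟩
  set A : ℂ := (a : ℂ) with hA
  have hFM : F ≤ ℚ⟮A⟯ := hsup ▸ le_sup_right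
  haveI := hFfd
  have hF2 : 2 ≤ finrank ℚ ↥F := by
    have h1 : finrank ℚ ↥F ≠ 1 := fun h => hFne (IntermediateField.finrank_eq_one_iff.mp h)
    have h0 : 0 < finrank ℚ ↥F := finrank_pos
    omega
  have hsL := key_mem k hk c hcpos hirr a ha hpow L hLM (by omega)
  have hsF := key_mem k hk c hcpos hirr a ha hpow F hFM hF2
  have hLgal : L ≤ ⨆ f : ↥L →ₐ[ℚ] ℂ, f.fieldRange := by
    conv_lhs => rw [← IntermediateField.fieldRange_val L]
    exact le_iSup (fun f : ↥L →ₐ[ℚ] ℂ => f.fieldRange) L.val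
  have hmem : A ^ (2 ^ (k - 1)) ∈ (⨆ f : ↥L →ₐ[ℚ] ℂ, f.fieldRange) ⊓ F :=
    ⟨hLgal hsL, hsF⟩
  rw [hinf, IntermediateField.mem_bot] at hmem
  obtain ⟨q, hq⟩ := hmem
  have hexp : 2 ^ (k - 1) * 2 = 2 ^ k := by
    rw [← pow_succ]; congr 1; omega
  have hAn : A ^ (2 ^ k) = ((c : ℚ) : ℂ) := by
    rw [hA, ← Complex.ofReal_pow, hpow]; push_cast; ring
  have hq2 : q ^ 2 = (c : ℚ) := by
    have h1 : ((q ^ 2 : ℚ) : ℂ) = ((c : ℚ) : ℂ) := by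
      push_cast
      calc ((q : ℂ)) ^ 2 = (A ^ (2 ^ (k - 1))) ^ 2 := by
            rw [← hq]; norm_num [Complex.ofReal_ratCast]
        _ = A ^ (2 ^ k) := by rw [← pow_mul, hexp]
        _ = (c : ℂ) := by rw [hAn]; push_cast; ring
    exact_mod_cast h1
  have hfac : Polynomial.X ^ (2 ^ k) - Polynomial.C (c : ℚ) =
      (Polynomial.X ^ (2 ^ (k - 1)) + Polynomial.C q) *
        (Polynomial.X ^ (2 ^ (k - 1)) - Polynomial.C q) := by
    have h1 : (Polynomial.X : Polynomial ℚ) ^ (2 ^ k) = (Polynomial.X ^ (2 ^ (k - 1))) ^ 2 := by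
      rw [← pow_mul, hexp]
    have h2 : Polynomial.C (c : ℚ) = (Polynomial.C q) ^ 2 := by
      rw [← map_pow, hq2]
    rw [h1, h2, sq_sub_sq]
  have hm0 : (0:ℕ) < 2 ^ (k - 1) := pow_pos (by norm_num) _
  rcases hirr.isUnit_or_isUnit hfac with h | h
  · refine Polynomial.not_isUnit_of_natDegree_pos _ ?_ h
    have : Polynomial.X ^ (2 ^ (k - 1)) + Polynomial.C q =
        Polynomial.X ^ (2 ^ (k - 1)) - Polynomial.C (-q) := by
      rw [map_neg, sub_neg_eq_add]
    rw [this, Polynomial.natDegree_X_pow_sub_C]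
    exact hm0
  · refine Polynomial.not_isUnit_of_natDegree_pos _ ?_ h
    rw [Polynomial.natDegree_X_pow_sub_C]
    exact hm0

end AuxProof

/-- Let `n = 2 ^ k` with `k ≥ 2`, and let `c` be a positive odd integer such
that `x ^ n - c` is irreducible over `ℚ`. Let `a = c^{1/n}` be the positive real root of
`x ^ n - c` and `L = ℚ(a)`. Then `L/ℚ` is primitive. -/
theorem primitive_rational_two_power_root
    (k : ℕ) (hk : 2 ≤ k) (c : ℕ) (hodd : Odd c) (hcpos : 0 < c)
    (hirr : Irreducible (Polynomial.X ^ (2 ^ k) - Polynomial.C (c : ℚ)))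
    (a : ℝ) (ha : 0 < a) (hpow : a ^ (2 ^ k) = (c : ℝ)) :
    IsPrimitive ℚ ℂ ℚ⟮((a : ℂ))⟯ := by
  exact main_test k hk c hodd hcpos hirr a ha hpow
end
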